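/- arXiv:2512.11428 — 3 statements merged into one kernel-verified Lean document; each statement's English description precedes it below -/
import Mathlib

section
/- For a ∈ (0,1), define n_a(s) = (1/(√s + 1)) · sinh(a√s)/sinh(√s) and d_a(s) = (√s/(√s + 1)) · sinh(a√s)/cosh(a√s) for s in the right half-plane ℂ₊ = {s : Re s > 0}, where √s is the principal branch. Then n_a and d_a are bounded holomorphic functions on ℂ₊. -/
open Complex

private lemma normSq_sinh' (w : ℂ) :
    Complex.normSq (Complex.sinh w) = Real.sinh w.re ^ 2 + Real.sin w.im ^ 2 := by
  have h : Complex.sinh w =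
      Complex.ofReal (Real.sinh w.re * Real.cos w.im) +
        Complex.ofReal (Real.cosh w.re * Real.sin w.im) * Complex.I := by
    conv_lhs => rw [← Complex.re_add_im w]
    rw [Complex.sinh_add, Complex.sinh_mul_I, Complex.cosh_mul_I]
    push_cast
    ring
  rw [h, Complex.normSq_add_mul_I]
  have h1 := Real.sin_sq_add_cos_sq w.im
  have h2 := Real.cosh_sq w.re
  nlinarith [Real.sinh_sq w.re]

private lemma normSq_cosh' (w : ℂ) :
    Complex.normSq (Complex.cosh w) = Real.sinh w.re ^ 2 + Real.cos w.im ^ 2 := by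
  have h : Complex.cosh w =
      Complex.ofReal (Real.cosh w.re * Real.cos w.im) +
        Complex.ofReal (Real.sinh w.re * Real.sin w.im) * Complex.I := by
    conv_lhs => rw [← Complex.re_add_im w]
    rw [Complex.cosh_add, Complex.sinh_mul_I, Complex.cosh_mul_I]
    push_cast
    ring
  rw [h, Complex.normSq_add_mul_I]
  have h1 := Real.sin_sq_add_cos_sq w.im
  have h2 := Real.cosh_sq w.re
  nlinarith

private lemma sqrt_sector {s : ℂ} (hs : 0 < s.re) :
    0 < (s ^ ((1:ℂ)/2)).re ∧ |(s ^ ((1:ℂ)/2)).im| ≤ (s ^ ((1:ℂ)/2)).re := by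
  have hs0 : s ≠ 0 := by
    intro h; rw [h] at hs; simp at hs
  rw [Complex.cpow_def_of_ne_zero hs0]
  have him : (Complex.log s * ((1:ℂ)/2)).im = s.arg / 2 := by
    have : ((1:ℂ)/2) = Complex.ofReal (1/2) := by norm_num
    rw [this, Complex.mul_im]
    simp [Complex.log_im]
    ring
  rw [Complex.exp_re, Complex.exp_im, him]
  set r := Real.exp ((Complex.log s * ((1:ℂ)/2)).re) with hr
  have hrpos : 0 < r := Real.exp_pos _
  have harg : |s.arg| < Real.pi / 2 :=
    Complex.abs_arg_lt_pi_div_two_iff.2 (Or.inl hs)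
  set θ := s.arg / 2 with hθ
  have hθ4 : |θ| < Real.pi / 4 := by
    rw [hθ, abs_div]
    rw [abs_of_pos (by norm_num : (0:ℝ) < 2)]
    linarith
  have hpi := Real.pi_pos
  have hθlt : -(Real.pi/2) < θ ∧ θ < Real.pi/2 := by
    constructor <;> [nlinarith [abs_lt.1 hθ4]; nlinarith [abs_lt.1 hθ4]]
  have hcos : 0 < Real.cos θ :=
    Real.cos_pos_of_mem_Ioo ⟨hθlt.1, hθlt.2⟩
  have hsin : |Real.sin θ| ≤ Real.cos θ := by
    have h1 : Real.sin |θ| ≤ Real.sin (Real.pi/4) := by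
      apply Real.strictMonoOn_sin.monotoneOn
      · exact ⟨by linarith [abs_nonneg θ], by linarith [hθ4.le]⟩
      · exact ⟨by linarith, by linarith⟩
      · exact hθ4.le
    have h2 : Real.cos (Real.pi/4) ≤ Real.cos |θ| :=
      Real.cos_le_cos_of_nonneg_of_le_pi (abs_nonneg θ) (by linarith) hθ4.le
    have h3 : |Real.sin θ| = Real.sin |θ| := by
      rcases le_or_gt 0 θ with h | h
      · rw [_root_.abs_of_nonneg h,
          _root_.abs_of_nonneg (Real.sin_nonneg_of_nonneg_of_le_pi h (by linarith))]
      · rw [_root_.abs_of_neg h, Real.sin_neg]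
        rw [_root_.abs_of_neg (Real.sin_neg_of_neg_of_neg_pi_lt h (by linarith))]
    rw [h3, ← Real.cos_abs θ]
    rw [Real.sin_pi_div_four] at h1
    rw [Real.cos_pi_div_four] at h2
    linarith
  constructor
  · positivity
  · rw [abs_mul, abs_of_pos hrpos]
    calc r * |Real.sin θ| ≤ r * Real.cos θ := by
          exact mul_le_mul_of_nonneg_left hsin hrpos.le
      _ = r * Real.cos θ := rfl

private lemma sinh_ne_zero' {z : ℂ} (hz : 0 < z.re) : Complex.sinh z ≠ 0 := by
  intro h
  have := normSq_sinh' z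
  rw [h, map_zero] at this
  have h1 : 0 < Real.sinh z.re := Real.sinh_pos_iff.2 hz
  nlinarith [sq_nonneg (Real.sin z.im)]

private lemma cosh_ne_zero' {z : ℂ} (hz : 0 < z.re) : Complex.cosh z ≠ 0 := by
  intro h
  have := normSq_cosh' z
  rw [h, map_zero] at this
  have h1 : 0 < Real.sinh z.re := Real.sinh_pos_iff.2 hz
  nlinarith [sq_nonneg (Real.cos z.im)]

private lemma sinh_ratio_bound {a : ℝ} (ha : a ∈ Set.Ioo (0:ℝ) 1) {z : ℂ}
    (hz : 0 < z.re) (hz2 : |z.im| ≤ z.re) :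
    ‖Complex.sinh ((a:ℂ) * z)‖ ≤ Real.sqrt 2 * ‖Complex.sinh z‖ := by
  obtain ⟨ha0, ha1⟩ := ha
  have hre : ((a:ℂ) * z).re = a * z.re := by simp [Complex.mul_re]
  have him : ((a:ℂ) * z).im = a * z.im := by simp [Complex.mul_im]
  have key : Complex.normSq (Complex.sinh ((a:ℂ) * z)) ≤
      2 * Complex.normSq (Complex.sinh z) := by
    rw [normSq_sinh', normSq_sinh', hre, him]
    have h1 : Real.sinh (a * z.re) ≤ Real.sinh z.re :=
      Real.sinh_le_sinh.2 (by nlinarith)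
    have h1' : 0 < Real.sinh (a * z.re) := Real.sinh_pos_iff.2 (by positivity)
    have h2 : Real.sin (a * z.im) ^ 2 ≤ (a * z.im) ^ 2 := Real.sin_sq_le_sq
    have h3 : z.re < Real.sinh z.re := Real.self_lt_sinh_iff.2 hz
    have h4 : z.im ^ 2 ≤ z.re ^ 2 := by nlinarith [abs_nonneg z.im, _root_.sq_abs z.im]
    have ha2 : a ^ 2 ≤ 1 := by nlinarith
    have h5 : (a * z.im) ^ 2 ≤ z.im ^ 2 := by nlinarith [sq_nonneg z.im]
    have h6 : z.re ^ 2 ≤ Real.sinh z.re ^ 2 := by nlinarith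
    have h7 : Real.sinh (a * z.re) ^ 2 ≤ Real.sinh z.re ^ 2 := by nlinarith
    linarith [h2, h5, h4, h6, h7, sq_nonneg (Real.sin z.im)]
  have e1 : ‖Complex.sinh ((a:ℂ) * z)‖ = Real.sqrt (Complex.normSq (Complex.sinh ((a:ℂ)*z))) := by
    rw [Complex.norm_def]
  have e2 : ‖Complex.sinh z‖ = Real.sqrt (Complex.normSq (Complex.sinh z)) := by
    rw [Complex.norm_def]
  rw [e1, e2, ← Real.sqrt_mul (by norm_num : (0:ℝ) ≤ 2)]
  exact Real.sqrt_le_sqrt key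

private lemma tanh_bound {w : ℂ} (hw : 0 < w.re) (hw2 : |w.im| ≤ w.re) :
    ‖Complex.sinh w‖ ≤ Real.sqrt 5 * ‖Complex.cosh w‖ := by
  have key : Complex.normSq (Complex.sinh w) ≤ 5 * Complex.normSq (Complex.cosh w) := by
    rw [normSq_sinh', normSq_cosh']
    rcases lt_or_ge (|w.im|) (1/2) with h | h
    · have h1 : Real.sin w.im ^ 2 ≤ w.im ^ 2 := Real.sin_sq_le_sq
      have h2 : 1 - w.im ^ 2 / 2 ≤ Real.cos w.im := Real.one_sub_sq_div_two_le_cos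
      have h3 : w.im ^ 2 < 1/4 := by nlinarith [_root_.sq_abs w.im, abs_nonneg w.im]
      nlinarith [sq_nonneg (Real.sinh w.re)]
    · have h1 : 1/2 ≤ w.re := le_trans h hw2
      have h2 : w.re < Real.sinh w.re := Real.self_lt_sinh_iff.2 hw
      have h3 : Real.sin w.im ^ 2 ≤ 1 := Real.sin_sq_le_one w.im
      nlinarith [sq_nonneg (Real.cos w.im)]
  have e1 : ‖Complex.sinh w‖ = Real.sqrt (Complex.normSq (Complex.sinh w)) := by
    rw [Complex.norm_def]
  have e2 : ‖Complex.cosh w‖ = Real.sqrt (Complex.normSq (Complex.cosh w)) := by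
    rw [Complex.norm_def]
  rw [e1, e2, ← Real.sqrt_mul (by norm_num : (0:ℝ) ≤ 5)]
  exact Real.sqrt_le_sqrt key

theorem na_da_bounded_holomorphic (a : ℝ) (ha : a ∈ Set.Ioo (0:ℝ) 1) :
    (DifferentiableOn ℂ
        (fun s : ℂ => (1 / (s ^ ((1:ℂ)/2) + 1)) *
          (Complex.sinh ((a : ℂ) * s ^ ((1:ℂ)/2)) / Complex.sinh (s ^ ((1:ℂ)/2))))
        {s : ℂ | 0 < s.re} ∧
      ∃ M, ∀ s : ℂ, 0 < s.re →
        ‖(1 / (s ^ ((1:ℂ)/2) + 1)) *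
          (Complex.sinh ((a : ℂ) * s ^ ((1:ℂ)/2)) / Complex.sinh (s ^ ((1:ℂ)/2)))‖ ≤ M) ∧
    (DifferentiableOn ℂ
        (fun s : ℂ => (s ^ ((1:ℂ)/2) / (s ^ ((1:ℂ)/2) + 1)) *
          (Complex.sinh ((a : ℂ) * s ^ ((1:ℂ)/2)) / Complex.cosh ((a : ℂ) * s ^ ((1:ℂ)/2))))
        {s : ℂ | 0 < s.re} ∧
      ∃ M, ∀ s : ℂ, 0 < s.re →
        ‖(s ^ ((1:ℂ)/2) / (s ^ ((1:ℂ)/2) + 1)) *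
          (Complex.sinh ((a : ℂ) * s ^ ((1:ℂ)/2)) / Complex.cosh ((a : ℂ) * s ^ ((1:ℂ)/2)))‖ ≤ M) := by
  obtain ⟨ha0, ha1⟩ := ha
  -- common facts at each point
  have facts : ∀ s : ℂ, 0 < s.re →
      DifferentiableAt ℂ (fun s : ℂ => s ^ ((1:ℂ)/2)) s ∧
      Complex.sinh (s ^ ((1:ℂ)/2)) ≠ 0 ∧
      Complex.cosh ((a:ℂ) * s ^ ((1:ℂ)/2)) ≠ 0 ∧
      s ^ ((1:ℂ)/2) + 1 ≠ 0 := by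
    intro s hs
    obtain ⟨h1, h2⟩ := sqrt_sector hs
    have hdiff : DifferentiableAt ℂ (fun s : ℂ => s ^ ((1:ℂ)/2)) s :=
      differentiableAt_id.cpow (differentiableAt_const _)
        (Complex.mem_slitPlane_iff.2 (Or.inl hs))
    have haz : 0 < ((a:ℂ) * s ^ ((1:ℂ)/2)).re := by
      rw [show ((a:ℂ) * s ^ ((1:ℂ)/2)).re = a * (s ^ ((1:ℂ)/2)).re by simp [Complex.mul_re]]
      positivity
    refine ⟨hdiff, sinh_ne_zero' h1, cosh_ne_zero' haz, ?_⟩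
    intro h
    have := congrArg Complex.re h
    simp only [Complex.add_re, Complex.one_re, Complex.zero_re] at this
    linarith
  refine ⟨⟨?_, ?_⟩, ?_, ?_⟩
  · -- differentiability of n_a
    intro s hs
    simp only [Set.mem_setOf_eq] at hs
    obtain ⟨hdiff, hsz, hcz, hz1⟩ := facts s hs
    apply DifferentiableAt.differentiableWithinAt
    exact ((differentiableAt_const 1).div (hdiff.add (differentiableAt_const 1)) hz1).mul
      ((Complex.differentiable_sinh.differentiableAt.comp s
        ((differentiableAt_const _).mul hdiff)).div
       (Complex.differentiable_sinh.differentiableAt.comp s hdiff) hsz)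
  · -- bound for n_a
    refine ⟨Real.sqrt 2, fun s hs => ?_⟩
    obtain ⟨h1, h2⟩ := sqrt_sector hs
    obtain ⟨_, hsz, _, hz1⟩ := facts s hs
    set z := s ^ ((1:ℂ)/2) with hzdef
    have hb1 : ‖(1:ℂ) / (z + 1)‖ ≤ 1 := by
      rw [norm_div, norm_one]
      rw [div_le_one (norm_pos_iff.2 hz1)]
      calc (1:ℝ) ≤ (z+1).re := by simp only [Complex.add_re, Complex.one_re]; linarith
        _ ≤ ‖z + 1‖ := Complex.re_le_norm _
    have hb2 : ‖Complex.sinh ((a:ℂ) * z) / Complex.sinh z‖ ≤ Real.sqrt 2 := by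
      rw [norm_div, div_le_iff₀ (norm_pos_iff.2 hsz)]
      exact sinh_ratio_bound ⟨ha0, ha1⟩ h1 h2
    calc ‖(1:ℂ)/(z+1) * (Complex.sinh ((a:ℂ)*z) / Complex.sinh z)‖
        = ‖(1:ℂ)/(z+1)‖ * ‖Complex.sinh ((a:ℂ)*z) / Complex.sinh z‖ := norm_mul _ _
      _ ≤ 1 * Real.sqrt 2 := by
          apply mul_le_mul hb1 hb2 (norm_nonneg _) (by norm_num)
      _ = Real.sqrt 2 := one_mul _
  · -- differentiability of d_a
    intro s hs
    simp only [Set.mem_setOf_eq] at hs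
    obtain ⟨hdiff, hsz, hcz, hz1⟩ := facts s hs
    apply DifferentiableAt.differentiableWithinAt
    exact (hdiff.div (hdiff.add (differentiableAt_const 1)) hz1).mul
      ((Complex.differentiable_sinh.differentiableAt.comp s
        ((differentiableAt_const _).mul hdiff)).div
       (Complex.differentiable_cosh.differentiableAt.comp s
        ((differentiableAt_const _).mul hdiff)) hcz)
  · -- bound for d_a
    refine ⟨Real.sqrt 5, fun s hs => ?_⟩
    obtain ⟨h1, h2⟩ := sqrt_sector hs
    obtain ⟨_, _, hcz, hz1⟩ := facts s hs
    set z := s ^ ((1:ℂ)/2) with hzdef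
    have hb1 : ‖z / (z + 1)‖ ≤ 1 := by
      rw [norm_div]
      rw [div_le_one (norm_pos_iff.2 hz1)]
      have : Complex.normSq z ≤ Complex.normSq (z + 1) := by
        simp only [Complex.normSq_apply, Complex.add_re, Complex.add_im, Complex.one_re,
          Complex.one_im]
        nlinarith
      rw [Complex.norm_def, Complex.norm_def]
      exact Real.sqrt_le_sqrt this
    have haz : 0 < ((a:ℂ) * z).re := by
      rw [show ((a:ℂ) * z).re = a * z.re by simp [Complex.mul_re]]
      positivity
    have haz2 : |((a:ℂ) * z).im| ≤ ((a:ℂ) * z).re := by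
      rw [show ((a:ℂ) * z).im = a * z.im by simp [Complex.mul_im],
        show ((a:ℂ) * z).re = a * z.re by simp [Complex.mul_re], abs_mul,
        abs_of_pos ha0]
      exact mul_le_mul_of_nonneg_left h2 ha0.le
    have hb2 : ‖Complex.sinh ((a:ℂ) * z) / Complex.cosh ((a:ℂ) * z)‖ ≤ Real.sqrt 5 := by
      rw [norm_div, div_le_iff₀ (norm_pos_iff.2 hcz)]
      exact tanh_bound haz haz2
    calc ‖z/(z+1) * (Complex.sinh ((a:ℂ)*z) / Complex.cosh ((a:ℂ)*z))‖
        = ‖z/(z+1)‖ * ‖Complex.sinh ((a:ℂ)*z) / Complex.cosh ((a:ℂ)*z)‖ := norm_mul _ _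
      _ ≤ 1 * Real.sqrt 5 := by
          apply mul_le_mul hb1 hb2 (norm_nonneg _) (by norm_num)
      _ = Real.sqrt 5 := one_mul _
end

section
/- For a ∈ (0,1), there exists δ > 0 such that |n_a(s)|² + |d_a(s)|² ≥ δ for all s in the right half-plane ℂ₊, where n_a(s) = (1/(√s+1))·sinh(a√s)/sinh(√s) and d_a(s) = (√s/(√s+1))·tanh(a√s). -/
open Complex

namespace CoronaAuxAll

lemma sinh_ne_zero_of_re_pos {z : ℂ} (hz : 0 < z.re) : Complex.sinh z ≠ 0 := by
  intro h
  unfold Complex.sinh at h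
  rw [div_eq_zero_iff, sub_eq_zero] at h
  rcases h with h | h
  · have := congrArg norm h
    rw [Complex.norm_exp, Complex.norm_exp] at this
    simp only [Complex.neg_re] at this
    have := Real.exp_injective this
    linarith
  · norm_num at h

lemma norm_sinh_sub_le {z : ℂ} (hz : ‖z‖ ≤ 1) : ‖Complex.sinh z - z‖ ≤ ‖z‖ ^ 2 := by
  have h1 : ‖Complex.exp z - 1 - z‖ ≤ ‖z‖ ^ 2 := by
    simpa using
      Complex.norm_exp_sub_one_sub_id_le (x := z) (by simpa using hz)
  have h2 : ‖Complex.exp (-z) - 1 - (-z)‖ ≤ ‖z‖ ^ 2 := by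
    simpa using
      Complex.norm_exp_sub_one_sub_id_le (x := -z) (by simpa using hz)
  have hrw : Complex.sinh z - z =
      ((Complex.exp z - 1 - z) - (Complex.exp (-z) - 1 - (-z))) / 2 := by
    unfold Complex.sinh; ring
  rw [hrw, norm_div]
  have h2n : ‖(2:ℂ)‖ = 2 := by norm_num
  rw [h2n]
  have := norm_sub_le (Complex.exp z - 1 - z) (Complex.exp (-z) - 1 - (-z))
  linarith

lemma norm_sinh_lower {z : ℂ} (hz : ‖z‖ ≤ 1) : ‖z‖ - ‖z‖ ^ 2 ≤ ‖Complex.sinh z‖ := by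
  have h := norm_sinh_sub_le hz
  have h2 : ‖z‖ - ‖Complex.sinh z‖ ≤ ‖Complex.sinh z - z‖ := by
    rw [norm_sub_rev]
    exact (norm_sub_norm_le _ _).trans (le_refl _)
  linarith

lemma norm_sinh_upper {z : ℂ} (hz : ‖z‖ ≤ 1) : ‖Complex.sinh z‖ ≤ ‖z‖ + ‖z‖ ^ 2 := by
  have h := norm_sinh_sub_le hz
  have h2 : ‖Complex.sinh z‖ - ‖z‖ ≤ ‖Complex.sinh z - z‖ := norm_sub_norm_le _ _
  linarith

lemma norm_tanh_ge {z : ℂ} (hz : 1 ≤ z.re) : 1/2 ≤ ‖Complex.tanh z‖ := by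
  have hx : (0:ℝ) < z.re := by linarith
  have hlt : Real.exp (-z.re) < Real.exp z.re := Real.exp_lt_exp.mpr (by linarith)
  have hsinh : (Real.exp z.re - Real.exp (-z.re)) / 2 ≤ ‖Complex.sinh z‖ := by
    have : ‖Complex.exp z‖ - ‖Complex.exp (-z)‖ ≤ ‖Complex.exp z - Complex.exp (-z)‖ :=
      norm_sub_norm_le _ _
    have he1 : ‖Complex.exp z‖ = Real.exp z.re := by
      simp [Complex.norm_exp]
    have he2 : ‖Complex.exp (-z)‖ = Real.exp (-z.re) := by
      simp [Complex.norm_exp]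
    unfold Complex.sinh
    rw [norm_div]
    have h2n : ‖(2:ℂ)‖ = 2 := by norm_num
    rw [h2n]
    rw [he1, he2] at this
    linarith
  have hcosh : ‖Complex.cosh z‖ ≤ (Real.exp z.re + Real.exp (-z.re)) / 2 := by
    have := norm_add_le (Complex.exp z) (Complex.exp (-z))
    have he1 : ‖Complex.exp z‖ = Real.exp z.re := by
      simp [Complex.norm_exp]
    have he2 : ‖Complex.exp (-z)‖ = Real.exp (-z.re) := by
      simp [Complex.norm_exp]
    unfold Complex.cosh
    rw [norm_div]
    have h2n : ‖(2:ℂ)‖ = 2 := by norm_num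
    rw [h2n]
    rw [he1, he2] at this
    linarith
  have hcosh_pos : 0 < ‖Complex.cosh z‖ := by
    have hle : (Real.exp z.re - Real.exp (-z.re)) / 2 ≤ ‖Complex.cosh z‖ := by
      have : ‖Complex.exp z‖ - ‖Complex.exp (-z)‖ ≤ ‖Complex.exp z + Complex.exp (-z)‖ := by
        have := norm_sub_norm_le (Complex.exp z) (-Complex.exp (-z))
        simpa [sub_neg_eq_add] using this
      have he1 : ‖Complex.exp z‖ = Real.exp z.re := by
        simp [Complex.norm_exp]
      have he2 : ‖Complex.exp (-z)‖ = Real.exp (-z.re) := by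
        simp [Complex.norm_exp]
      unfold Complex.cosh
      rw [norm_div]
      have h2n : ‖(2:ℂ)‖ = 2 := by norm_num
      rw [h2n]
      rw [he1, he2] at this
      linarith
    linarith
  rw [Complex.tanh_eq_sinh_div_cosh, norm_div]
  have key : 1/2 ≤ ((Real.exp z.re - Real.exp (-z.re)) / 2) / ((Real.exp z.re + Real.exp (-z.re)) / 2) := by
    rw [le_div_iff₀ (by positivity)]
    have h3 : (3:ℝ) ≤ Real.exp 2 := by
      have := Real.add_one_le_exp (2:ℝ)
      linarith
    have h4 : Real.exp 2 ≤ Real.exp (2 * z.re) := Real.exp_le_exp.mpr (by linarith)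
    have h5 : Real.exp (2 * z.re) * Real.exp (-z.re) = Real.exp z.re := by
      rw [← Real.exp_add]; ring_nf
    have h6 : (0:ℝ) < Real.exp (-z.re) := Real.exp_pos _
    nlinarith
  calc (1:ℝ)/2 ≤ ((Real.exp z.re - Real.exp (-z.re)) / 2) / ((Real.exp z.re + Real.exp (-z.re)) / 2) := key
    _ ≤ ‖Complex.sinh z‖ / ‖Complex.cosh z‖ := by
        apply div_le_div₀ (norm_nonneg _) hsinh hcosh_pos hcosh

lemma sector_bound (a : ℝ) (ha0 : 0 < a) (ha1 : a < 1) :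
    ∃ c > 0, ∀ w : ℂ, |w.im| ≤ w.re → (1:ℝ)/2 ≤ ‖w‖ → w.re ≤ 1/a →
      c ≤ ‖(1 / (w + 1)) * (Complex.sinh ((a:ℂ) * w) / Complex.sinh w)‖ := by
  set K : Set ℂ := {w : ℂ | |w.im| ≤ w.re ∧ 1/2 ≤ ‖w‖ ∧ w.re ≤ 1/a} with hK
  have hKre : ∀ w ∈ K, 0 < w.re := by
    intro w hw
    obtain ⟨h1, h2, h3⟩ := hw
    rcases lt_or_eq_of_le (le_trans (abs_nonneg _) h1) with h | h
    · exact h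
    · exfalso
      have him : w.im = 0 := by
        have := h1; rw [← h] at this
        simpa [abs_nonpos_iff] using this
      have hwz : w = 0 := Complex.ext (by simp [← h]) (by simp [him])
      rw [hwz] at h2; simp at h2; linarith
  have hKclosed : IsClosed K := by
    apply IsClosed.inter
    · exact isClosed_le (continuous_abs.comp Complex.continuous_im) Complex.continuous_re
    · apply IsClosed.inter
      · exact isClosed_le continuous_const continuous_norm
      · exact isClosed_le Complex.continuous_re continuous_const
  have hKbdd : Bornology.IsBounded K := by
    apply Bornology.IsBounded.subset (Metric.isBounded_closedBall (x := (0:ℂ)) (r := 2/a))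
    intro w hw
    obtain ⟨h1, h2, h3⟩ := hw
    simp only [Metric.mem_closedBall, dist_zero_right]
    have := Complex.norm_le_abs_re_add_abs_im w
    have hre : 0 < w.re := hKre w ⟨h1, h2, h3⟩
    rw [abs_of_pos hre] at this
    have : ‖w‖ ≤ 2 * w.re := by linarith
    calc ‖w‖ ≤ 2 * w.re := this
      _ ≤ 2 * (1/a) := by linarith
      _ = 2/a := by ring
  have hKcompact : IsCompact K := Metric.isCompact_of_isClosed_isBounded hKclosed hKbdd
  have hKne : K.Nonempty := by
    refine ⟨1, ?_, ?_, ?_⟩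
    · simp
    · simp; norm_num
    · simp only [Complex.one_re]
      rw [le_div_iff₀ ha0]; linarith
  have hne1 : ∀ w ∈ K, w + 1 ≠ 0 := by
    intro w hw h
    have := hKre w hw
    have : (w + 1).re = 0 := by rw [h]; simp
    simp only [Complex.add_re, Complex.one_re] at this
    linarith [hKre w hw]
  have hsw : ∀ w ∈ K, Complex.sinh w ≠ 0 := fun w hw => sinh_ne_zero_of_re_pos (hKre w hw)
  have hsaw : ∀ w ∈ K, Complex.sinh ((a:ℂ) * w) ≠ 0 := by
    intro w hw
    apply sinh_ne_zero_of_re_pos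
    have : ((a:ℂ) * w).re = a * w.re := by
      simp [Complex.mul_re, Complex.ofReal_re, Complex.ofReal_im]
    rw [this]
    exact mul_pos ha0 (hKre w hw)
  have hcont : ContinuousOn
      (fun w : ℂ => ‖(1 / (w + 1)) * (Complex.sinh ((a:ℂ) * w) / Complex.sinh w)‖) K := by
    apply ContinuousOn.norm
    apply ContinuousOn.mul
    · exact ContinuousOn.div continuousOn_const
        (Continuous.continuousOn (by continuity)) hne1
    · exact ContinuousOn.div
        (Continuous.continuousOn (Complex.continuous_sinh.comp (by continuity)))
        (Continuous.continuousOn Complex.continuous_sinh) hsw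
  obtain ⟨w₀, hw₀K, hmin⟩ := hKcompact.exists_isMinOn hKne hcont
  refine ⟨‖(1 / (w₀ + 1)) * (Complex.sinh ((a:ℂ) * w₀) / Complex.sinh w₀)‖, ?_, ?_⟩
  · rw [gt_iff_lt, norm_pos_iff]
    apply mul_ne_zero
    · exact div_ne_zero one_ne_zero (hne1 w₀ hw₀K)
    · exact div_ne_zero (hsaw w₀ hw₀K) (hsw w₀ hw₀K)
  · intro w h1 h2 h3
    exact hmin ⟨h1, h2, h3⟩


lemma sector_full (a : ℝ) (ha0 : 0 < a) (ha1 : a < 1) :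
    ∃ δ > 0, ∀ w : ℂ, |w.im| < w.re →
      ‖(1 / (w + 1)) * (Complex.sinh ((a:ℂ) * w) / Complex.sinh w)‖ ^ 2 +
        ‖(w / (w + 1)) * Complex.tanh ((a:ℂ) * w)‖ ^ 2 ≥ δ := by
  obtain ⟨c, hc, hmid⟩ := sector_bound a ha0 ha1
  refine ⟨min ((2*a/9)^2) (min (1/16) (c^2)), by positivity, ?_⟩
  intro w hw
  have hre : 0 < w.re := lt_of_le_of_lt (abs_nonneg _) hw
  have hGnn : (0:ℝ) ≤ ‖(w / (w + 1)) * Complex.tanh ((a:ℂ) * w)‖ ^ 2 := by positivity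
  have hFnn : (0:ℝ) ≤ ‖(1 / (w + 1)) * (Complex.sinh ((a:ℂ) * w) / Complex.sinh w)‖ ^ 2 := by
    positivity
  have hw1pos : 0 < ‖w + 1‖ := by
    rw [norm_pos_iff]
    intro h
    have : (w + 1).re = 0 := by rw [h]; simp
    simp only [Complex.add_re, Complex.one_re] at this
    linarith
  have hw1le : ‖w + 1‖ ≤ ‖w‖ + 1 := by
    calc ‖w + 1‖ ≤ ‖w‖ + ‖(1:ℂ)‖ := norm_add_le _ _
      _ = ‖w‖ + 1 := by norm_num
  have hrele : w.re ≤ ‖w‖ := by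
    exact Complex.re_le_norm w
  by_cases h1 : ‖w‖ ≤ 1/2
  · -- small region
    have hwn0 : 0 < ‖w‖ := by
      rw [norm_pos_iff]
      intro h; rw [h] at hre; simp at hre
    have hnaw : ‖(a:ℂ) * w‖ = a * ‖w‖ := by
      rw [norm_mul, Complex.norm_real, Real.norm_eq_abs, abs_of_pos ha0]
    have hawle : ‖(a:ℂ) * w‖ ≤ 1 := by rw [hnaw]; nlinarith
    have hlow := norm_sinh_lower hawle
    rw [hnaw] at hlow
    have hup := norm_sinh_upper (show ‖w‖ ≤ 1 by linarith)
    have hlow2 := norm_sinh_lower (show ‖w‖ ≤ 1 by linarith)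
    have hx : 0 < a * ‖w‖ := mul_pos ha0 hwn0
    have h5 : a * ‖w‖ ≤ 1/2 := by nlinarith
    have hsinh_aw : a * ‖w‖ / 2 ≤ ‖Complex.sinh ((a:ℂ) * w)‖ := by
      nlinarith [mul_le_mul_of_nonneg_left h5 hx.le]
    have hsinh_w_up : ‖Complex.sinh w‖ ≤ (3/2) * ‖w‖ := by nlinarith
    have hsinh_w_pos : 0 < ‖Complex.sinh w‖ := by nlinarith
    have hw1le' : ‖w + 1‖ ≤ 3/2 := by linarith
    have e1 : a/3 ≤ ‖Complex.sinh ((a:ℂ) * w)‖ / ‖Complex.sinh w‖ := by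
      rw [le_div_iff₀ hsinh_w_pos]; nlinarith
    have e2 : 2/3 ≤ 1 / ‖w + 1‖ := by
      rw [le_div_iff₀ hw1pos]; linarith
    have eF : 2*a/9 ≤ ‖(1 / (w + 1)) * (Complex.sinh ((a:ℂ) * w) / Complex.sinh w)‖ := by
      rw [norm_mul, norm_div, norm_div, norm_one]
      calc 2*a/9 = (2/3) * (a/3) := by ring
        _ ≤ (1/‖w+1‖) * (‖Complex.sinh ((a:ℂ) * w)‖ / ‖Complex.sinh w‖) := by
            apply mul_le_mul e2 e1 (by positivity) (by positivity)
    have eF2 : (2*a/9)^2 ≤ ‖(1 / (w + 1)) * (Complex.sinh ((a:ℂ) * w) / Complex.sinh w)‖ ^ 2 :=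
      pow_le_pow_left₀ (by positivity) eF 2
    have := min_le_left ((2*a/9)^2) (min (1/16) (c^2))
    linarith
  · by_cases h2 : 1/a ≤ w.re
    · -- large region
      have hawre : 1 ≤ ((a:ℂ) * w).re := by
        have : ((a:ℂ) * w).re = a * w.re := by
          simp [Complex.mul_re]
        rw [this]
        calc (1:ℝ) = a * (1/a) := by field_simp
          _ ≤ a * w.re := by
              apply mul_le_mul_of_nonneg_left h2 ha0.le
      have htanh := norm_tanh_ge hawre
      have hwge : 1 ≤ ‖w‖ := by
        have h1a : 1 ≤ 1/a := by rw [le_div_iff₀ ha0]; linarith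
        linarith
      have hq : 1/2 ≤ ‖w‖ / ‖w + 1‖ := by
        rw [le_div_iff₀ hw1pos]; linarith
      have eG : 1/4 ≤ ‖(w / (w + 1)) * Complex.tanh ((a:ℂ) * w)‖ := by
        rw [norm_mul, norm_div]
        calc (1:ℝ)/4 = (1/2) * (1/2) := by norm_num
          _ ≤ (‖w‖/‖w+1‖) * ‖Complex.tanh ((a:ℂ) * w)‖ := by
              apply mul_le_mul hq htanh (by norm_num) (by positivity)
      have eG2 : (1/4:ℝ)^2 ≤ ‖(w / (w + 1)) * Complex.tanh ((a:ℂ) * w)‖ ^ 2 :=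
        pow_le_pow_left₀ (by norm_num) eG 2
      have hm := min_le_right ((2*a/9)^2) (min (1/16) (c^2))
      have hm2 := min_le_left ((1/16):ℝ) (c^2)
      have : ((1:ℝ)/4)^2 = 1/16 := by norm_num
      linarith
    · -- middle region
      have hFc := hmid w hw.le (le_of_not_ge h1) (le_of_not_ge h2)
      have : c^2 ≤ ‖(1 / (w + 1)) * (Complex.sinh ((a:ℂ) * w) / Complex.sinh w)‖ ^ 2 :=
        pow_le_pow_left₀ hc.le hFc 2
      have hm := min_le_right ((2*a/9)^2) (min (1/16) (c^2))
      have hm2 := min_le_right ((1/16):ℝ) (c^2)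
      linarith


end CoronaAuxAll

open CoronaAuxAll in
theorem corona_lower_bound (a : ℝ) (ha : a ∈ Set.Ioo (0:ℝ) 1) :
    ∃ δ > 0, ∀ s : ℂ, 0 < s.re →
      ‖(1 / (s ^ ((1:ℂ)/2) + 1)) *
          (Complex.sinh ((a : ℂ) * s ^ ((1:ℂ)/2)) / Complex.sinh (s ^ ((1:ℂ)/2)))‖ ^ 2 +
        ‖(s ^ ((1:ℂ)/2) / (s ^ ((1:ℂ)/2) + 1)) * Complex.tanh ((a : ℂ) * s ^ ((1:ℂ)/2))‖ ^ 2 ≥ δ := by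
  obtain ⟨δ, hδ, hsec⟩ := sector_full a ha.1 ha.2
  refine ⟨δ, hδ, ?_⟩
  intro s hs
  set w := s ^ ((1:ℂ)/2) with hwdef
  have hs0 : s ≠ 0 := by
    intro h; rw [h] at hs; simp at hs
  have hwexp : w = Complex.exp (Complex.log s * ((1:ℂ)/2)) :=
    Complex.cpow_def_of_ne_zero hs0 _
  have hwre0 : 0 ≤ w.re := by
    rw [hwexp, Complex.exp_re]
    apply mul_nonneg (Real.exp_pos _).le
    have him : (Complex.log s * ((1:ℂ)/2)).im = (Complex.log s).im * (1/2) := by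
      simp [Complex.mul_im]
    rw [him, Complex.log_im]
    apply Real.cos_nonneg_of_mem_Icc
    constructor
    · have := Complex.neg_pi_lt_arg s; linarith
    · have := Complex.arg_le_pi s; linarith
  have hww : w * w = s := by
    rw [hwdef, ← Complex.cpow_add _ _ hs0]
    norm_num
  have hsq : w.im ^ 2 < w.re ^ 2 := by
    have := congrArg Complex.re hww
    simp only [Complex.mul_re] at this
    nlinarith
  have hrepos : 0 < w.re := by nlinarith [sq_nonneg w.im]
  have hlt : |w.im| < w.re := by
    rw [abs_lt]
    constructor <;> nlinarith
  exact hsec w hlt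
end

section
/- The map (0,1) ∋ a ↦ f_a ∈ H^∞(Δ) is continuous in the supremum norm, where f_a(z) = sinh(az)/((1+z)sinh(z)) on the angular domain Δ = {z : |Arg z| < π/4}. -/
/-- `sinh t ≤ t * cosh t` for `t ≥ 0`. -/
lemma sinh_le_mul_cosh {t : ℝ} (ht : 0 ≤ t) : Real.sinh t ≤ t * Real.cosh t := by
  have hd : ∀ s : ℝ, HasDerivAt (fun u : ℝ => u * Real.cosh u - Real.sinh u)
      (s * Real.sinh s) s := by
    intro s
    have h1 : HasDerivAt (fun u : ℝ => u * Real.cosh u)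
        (1 * Real.cosh s + s * Real.sinh s) s :=
      (hasDerivAt_id s).mul (Real.hasDerivAt_cosh s)
    have h2 := Real.hasDerivAt_sinh s
    have := h1.sub h2
    simp only [one_mul, add_sub_cancel_left] at this
    exact this
  have hmono : Monotone (fun u : ℝ => u * Real.cosh u - Real.sinh u) := by
    apply monotone_of_deriv_nonneg
    · exact fun s => (hd s).differentiableAt
    · intro s
      rw [(hd s).deriv]
      rcases le_total 0 s with hs | hs
      · exact mul_nonneg hs (Real.sinh_nonneg_iff.mpr hs)
      · nlinarith [Real.sinh_nonpos_iff.mpr hs]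
  have h0 := hmono ht
  simpa using h0

lemma sinh_decomp (x y : ℝ) :
    Complex.sinh ((x : ℂ) + (y : ℂ) * Complex.I) =
      ((Real.sinh x * Real.cos y : ℝ) : ℂ) + ((Real.cosh x * Real.sin y : ℝ) : ℂ) * Complex.I := by
  rw [Complex.sinh_add, Complex.cosh_mul_I, Complex.sinh_mul_I]
  push_cast [← Complex.ofReal_sinh, ← Complex.ofReal_cosh]
  ring

lemma cosh_decomp (x y : ℝ) :
    Complex.cosh ((x : ℂ) + (y : ℂ) * Complex.I) =
      ((Real.cosh x * Real.cos y : ℝ) : ℂ) + ((Real.sinh x * Real.sin y : ℝ) : ℂ) * Complex.I := by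
  rw [Complex.cosh_add, Complex.cosh_mul_I, Complex.sinh_mul_I]
  push_cast [← Complex.ofReal_sinh, ← Complex.ofReal_cosh]
  ring

lemma abs_sinh_sq (x y : ℝ) :
    (‖Complex.sinh ((x : ℂ) + (y : ℂ) * Complex.I)‖) ^ 2 =
      Real.sinh x ^ 2 + Real.sin y ^ 2 := by
  rw [sinh_decomp, Complex.sq_norm, Complex.normSq_add_mul_I]
  have h1 := Real.sin_sq_add_cos_sq y
  have h2 := Real.cosh_sq x
  nlinarith [h1, h2]

lemma abs_cosh_sq (x y : ℝ) :
    (‖Complex.cosh ((x : ℂ) + (y : ℂ) * Complex.I)‖) ^ 2 =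
      Real.cosh x ^ 2 - Real.sin y ^ 2 := by
  rw [cosh_decomp, Complex.sq_norm, Complex.normSq_add_mul_I]
  have h1 := Real.sin_sq_add_cos_sq y
  have h2 := Real.cosh_sq x
  nlinarith [h1, h2]

lemma sinh_lower (x y : ℝ) (hx : 0 ≤ x) :
    Real.sinh x ≤ ‖Complex.sinh ((x : ℂ) + (y : ℂ) * Complex.I)‖ := by
  have h := abs_sinh_sq x y
  have hA : 0 ≤ ‖Complex.sinh ((x : ℂ) + (y : ℂ) * Complex.I)‖ :=
    norm_nonneg _
  have hs : 0 ≤ Real.sinh x := Real.sinh_nonneg_iff.mpr hx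
  nlinarith [sq_nonneg (Real.sin y)]

lemma sinh_upper (x y : ℝ) :
    ‖Complex.sinh ((x : ℂ) + (y : ℂ) * Complex.I)‖ ≤ Real.sinh |x| + |y| := by
  have h := abs_sinh_sq x y
  have hA : 0 ≤ ‖Complex.sinh ((x : ℂ) + (y : ℂ) * Complex.I)‖ :=
    norm_nonneg _
  have hs : 0 ≤ Real.sinh |x| := Real.sinh_nonneg_iff.mpr (abs_nonneg x)
  have hsx : Real.sinh x ^ 2 = Real.sinh |x| ^ 2 := by
    rw [← Real.abs_sinh, sq_abs]
  have hsin : Real.sin y ^ 2 ≤ |y| ^ 2 := by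
    calc Real.sin y ^ 2 = |Real.sin y| ^ 2 := (sq_abs _).symm
      _ ≤ |y| ^ 2 := pow_le_pow_left₀ (abs_nonneg _) (Real.abs_sin_le_abs (x := y)) 2
  nlinarith [abs_nonneg y]

lemma cosh_upper (x y : ℝ) :
    ‖Complex.cosh ((x : ℂ) + (y : ℂ) * Complex.I)‖ ≤ Real.cosh x := by
  have h := abs_cosh_sq x y
  have hA : 0 ≤ ‖Complex.cosh ((x : ℂ) + (y : ℂ) * Complex.I)‖ :=
    norm_nonneg _
  have hc : 0 < Real.cosh x := Real.cosh_pos x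
  nlinarith [sq_nonneg (Real.sin y)]

set_option maxHeartbeats 1000000 in
theorem fa_continuous_in_a (a₀ : ℝ) (ha₀ : a₀ ∈ Set.Ioo (0:ℝ) 1) :
    ∀ ε > 0, ∃ δ > 0, ∀ a ∈ Set.Ioo (0:ℝ) 1, |a - a₀| < δ →
      ∀ z : ℂ, |z.arg| < Real.pi / 4 →
        ‖(if z = 0 then (a : ℂ) else Complex.sinh ((a : ℂ) * z) / ((1 + z) * Complex.sinh z)) -
          (if z = 0 then (a₀ : ℂ) else Complex.sinh ((a₀ : ℂ) * z) / ((1 + z) * Complex.sinh z))‖ < ε := by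
  intro ε hε
  refine ⟨ε / 3, by linarith, ?_⟩
  intro a ha hδ z hz
  by_cases hz0 : z = 0
  · subst hz0
    simp only [if_true]
    rw [← Complex.ofReal_sub, Complex.norm_real, Real.norm_eq_abs]
    linarith
  · simp only [if_neg hz0]
    set x := z.re with hxdef
    set y := z.im with hydef
    have hzeq : (x : ℂ) + (y : ℂ) * Complex.I = z := Complex.re_add_im z
    set r := ‖z‖ with hrdef
    have hr0 : 0 < r := norm_pos_iff.mpr hz0
    -- cosine bound from the sector condition
    have hcos : Real.sqrt 2 / 2 < Real.cos z.arg := by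
      have h1 : Real.cos (Real.pi / 4) < Real.cos |z.arg| :=
        Real.cos_lt_cos_of_nonneg_of_le_pi (abs_nonneg _)
          (by linarith [Real.pi_pos]) hz
      rwa [Real.cos_pi_div_four, Real.cos_abs] at h1
    have hxr : r * Real.cos z.arg = x := Complex.norm_mul_cos_arg z
    have hs2 : Real.sqrt 2 ^ 2 = 2 := Real.sq_sqrt (by norm_num)
    have hs2pos : 0 < Real.sqrt 2 := Real.sqrt_pos.mpr (by norm_num)
    have hkey : r * (Real.sqrt 2 / 2) < x := by
      have := mul_lt_mul_of_pos_left hcos hr0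
      linarith [hxr]
    have hx0 : 0 < x := by nlinarith
    have hrx : r ≤ Real.sqrt 2 * x := by nlinarith [mul_lt_mul_of_pos_left hkey hs2pos]
    have hy : |y| ≤ r := Complex.abs_im_le_norm z
    -- denominator lower bound
    have hsinhx : 0 < Real.sinh x := Real.sinh_pos_iff.mpr hx0
    have hszlow : Real.sinh x ≤ ‖Complex.sinh z‖ := by
      rw [← hzeq]; exact sinh_lower x y hx0.le
    have h1z : 1 + x ≤ ‖1 + z‖ := by
      have := Complex.re_le_norm (1 + z)
      simpa using this
    have hden : (1 + x) * Real.sinh x ≤ ‖(1 + z) * Complex.sinh z‖ := by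
      rw [norm_mul]
      exact mul_le_mul h1z hszlow hsinhx.le (norm_nonneg _)
    have hdpos : 0 < (1 + x) * Real.sinh x := by positivity
    -- numerator manipulation
    set c : ℝ := (a + a₀) / 2 with hcdef
    set d : ℝ := (a - a₀) / 2 with hddef
    have key : Complex.sinh ((a : ℂ) * z) - Complex.sinh ((a₀ : ℂ) * z) =
        2 * Complex.cosh ((c : ℂ) * z) * Complex.sinh ((d : ℂ) * z) := by
      have e1 : (a : ℂ) * z = (c : ℂ) * z + (d : ℂ) * z := by
        rw [hcdef, hddef]; push_cast; ring
      have e2 : (a₀ : ℂ) * z = (c : ℂ) * z - (d : ℂ) * z := by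
        rw [hcdef, hddef]; push_cast; ring
      rw [e1, e2, Complex.sinh_add, Complex.sinh_sub]; ring
    have hc0 : 0 ≤ c := by rw [hcdef]; linarith [ha.1, ha₀.1]
    have hcd1 : c + |d| ≤ 1 := by
      rcases le_total a a₀ with h | h
      · rw [hcdef, hddef, abs_of_nonpos (by linarith)]; linarith [ha₀.2]
      · rw [hcdef, hddef, abs_of_nonneg (by linarith)]; linarith [ha.2]
    -- bound on cosh factor
    have ecz : (c : ℂ) * z = ((c * x : ℝ) : ℂ) + ((c * y : ℝ) : ℂ) * Complex.I := by
      rw [← hzeq]; push_cast; ring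
    have hcoshb : ‖Complex.cosh ((c : ℂ) * z)‖ ≤ Real.cosh (c * x) := by
      rw [ecz]; exact cosh_upper _ _
    -- bound on sinh factor
    have edz : (d : ℂ) * z = ((d * x : ℝ) : ℂ) + ((d * y : ℝ) : ℂ) * Complex.I := by
      rw [← hzeq]; push_cast; ring
    have hsinhb : ‖Complex.sinh ((d : ℂ) * z)‖ ≤ Real.sinh (|d| * x) + |d| * r := by
      rw [edz]
      refine (sinh_upper _ _).trans ?_
      have e3 : |d * x| = |d| * x := by rw [abs_mul, abs_of_nonneg hx0.le]
      have e4 : |d * y| = |d| * |y| := abs_mul d y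
      rw [e3, e4]
      have : |d| * |y| ≤ |d| * r := mul_le_mul_of_nonneg_left hy (abs_nonneg d)
      linarith
    have hsinhb2 : ‖Complex.sinh ((d : ℂ) * z)‖ ≤
        (1 + Real.sqrt 2) * |d| * x * Real.cosh (|d| * x) := by
      have h1 : Real.sinh (|d| * x) ≤ (|d| * x) * Real.cosh (|d| * x) :=
        sinh_le_mul_cosh (mul_nonneg (abs_nonneg d) hx0.le)
      have h2 : |d| * r ≤ |d| * (Real.sqrt 2 * x) :=
        mul_le_mul_of_nonneg_left hrx (abs_nonneg d)
      have h3 : (1 : ℝ) ≤ Real.cosh (|d| * x) := Real.one_le_cosh _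
      have h4 : 0 ≤ |d| * x := mul_nonneg (abs_nonneg d) hx0.le
      nlinarith [hsinhb, mul_nonneg (mul_nonneg hs2pos.le (abs_nonneg d)) hx0.le]
    -- product of cosh bounds
    have hcoshmul : Real.cosh (c * x) * Real.cosh (|d| * x) ≤ Real.cosh x := by
      have h1 : Real.cosh (c * x) * Real.cosh (|d| * x) ≤ Real.cosh (c * x + |d| * x) := by
        rw [Real.cosh_add]
        nlinarith [mul_nonneg (Real.sinh_nonneg_iff.mpr (mul_nonneg hc0 hx0.le))
          (Real.sinh_nonneg_iff.mpr (mul_nonneg (abs_nonneg d) hx0.le))]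
      refine h1.trans ?_
      rw [Real.cosh_le_cosh]
      rw [abs_of_nonneg (by nlinarith [abs_nonneg d] : (0:ℝ) ≤ c * x + |d| * x),
        abs_of_nonneg hx0.le]
      nlinarith [abs_nonneg d]
    -- key real inequality: x cosh x ≤ (1+x) sinh x
    have hxcosh : x * Real.cosh x ≤ (1 + x) * Real.sinh x := by
      have h1 := Real.cosh_sub_sinh x
      have h2 : x ≤ Real.sinh x := Real.self_le_sinh_iff.mpr hx0.le
      have h3 : Real.exp (-x) ≤ 1 := by
        calc Real.exp (-x) ≤ Real.exp 0 := Real.exp_le_exp.mpr (by linarith)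
          _ = 1 := Real.exp_zero
      nlinarith [Real.exp_pos (-x)]
    -- numerator bound
    have hnum : ‖Complex.sinh ((a : ℂ) * z) - Complex.sinh ((a₀ : ℂ) * z)‖ ≤
        3 * |a - a₀| * ((1 + x) * Real.sinh x) := by
      rw [key]
      rw [norm_mul, norm_mul]
      simp only [Complex.norm_two]
      have hAc := norm_nonneg (Complex.cosh ((c : ℂ) * z))
      have hAs := norm_nonneg (Complex.sinh ((d : ℂ) * z))
      have hchain : 2 * ‖Complex.cosh ((c : ℂ) * z)‖ *
          ‖Complex.sinh ((d : ℂ) * z)‖ ≤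
          2 * Real.cosh (c * x) * ((1 + Real.sqrt 2) * |d| * x * Real.cosh (|d| * x)) := by
        have hcpos : 0 < Real.cosh (c * x) := Real.cosh_pos _
        have hmm := mul_le_mul hcoshb hsinhb2 hAs hcpos.le
        calc 2 * ‖Complex.cosh ((c : ℂ) * z)‖ *
            ‖Complex.sinh ((d : ℂ) * z)‖
            = 2 * (‖Complex.cosh ((c : ℂ) * z)‖ *
              ‖Complex.sinh ((d : ℂ) * z)‖) := by ring
          _ ≤ 2 * (Real.cosh (c * x) * ((1 + Real.sqrt 2) * |d| * x * Real.cosh (|d| * x))) := by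
              linarith
          _ = 2 * Real.cosh (c * x) * ((1 + Real.sqrt 2) * |d| * x * Real.cosh (|d| * x)) := by
              ring
      refine hchain.trans ?_
      have hdd : |d| = |a - a₀| / 2 := by rw [hddef, abs_div]; norm_num
      have hs2lt : Real.sqrt 2 < 2 := by nlinarith
      have hcoshpos : 0 < Real.cosh (|d| * x) := Real.cosh_pos _
      have h6 : 2 * Real.cosh (c * x) * ((1 + Real.sqrt 2) * |d| * x * Real.cosh (|d| * x)) =
          2 * (1 + Real.sqrt 2) * |d| * x * (Real.cosh (c * x) * Real.cosh (|d| * x)) := by ring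
      rw [h6]
      have h7 : 2 * (1 + Real.sqrt 2) * |d| * x * (Real.cosh (c * x) * Real.cosh (|d| * x)) ≤
          2 * (1 + Real.sqrt 2) * |d| * x * Real.cosh x := by
        have : 0 ≤ 2 * (1 + Real.sqrt 2) * |d| * x := by positivity
        exact mul_le_mul_of_nonneg_left hcoshmul this
      refine h7.trans ?_
      have h8 : 2 * (1 + Real.sqrt 2) * |d| * x * Real.cosh x =
          (1 + Real.sqrt 2) * |a - a₀| * (x * Real.cosh x) := by rw [hdd]; ring
      rw [h8]
      have h9 : (1 + Real.sqrt 2) * |a - a₀| * (x * Real.cosh x) ≤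
          (1 + Real.sqrt 2) * |a - a₀| * ((1 + x) * Real.sinh x) := by
        have : 0 ≤ (1 + Real.sqrt 2) * |a - a₀| := by positivity
        exact mul_le_mul_of_nonneg_left hxcosh this
      refine h9.trans ?_
      have h10 : 0 ≤ (1 + x) * Real.sinh x := hdpos.le
      have hM : 0 ≤ |a - a₀| * ((1 + x) * Real.sinh x) := mul_nonneg (abs_nonneg _) h10
      nlinarith [mul_le_mul_of_nonneg_right hs2lt.le hM]
    -- combine
    have hfrac : Complex.sinh ((a : ℂ) * z) / ((1 + z) * Complex.sinh z) -
        Complex.sinh ((a₀ : ℂ) * z) / ((1 + z) * Complex.sinh z) =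
        (Complex.sinh ((a : ℂ) * z) - Complex.sinh ((a₀ : ℂ) * z)) /
          ((1 + z) * Complex.sinh z) := div_sub_div_same _ _ _
    rw [hfrac, norm_div]
    calc ‖Complex.sinh ((a : ℂ) * z) - Complex.sinh ((a₀ : ℂ) * z)‖ /
          ‖(1 + z) * Complex.sinh z‖
        ≤ 3 * |a - a₀| * ((1 + x) * Real.sinh x) / ((1 + x) * Real.sinh x) := by
          apply div_le_div₀ (by positivity) hnum hdpos hden
      _ = 3 * |a - a₀| := by field_simp
      _ < ε := by rw [abs_sub_comm] at hδ ⊢; linarith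
end
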